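/- For positive bounded linear operators A and B on a complex Hilbert space, ‖A + B‖ ≤ max{‖A‖, ‖B‖} + ‖A^{1/2} B^{1/2}‖. -/

import Mathlib

open ContinuousLinearMap WithLp

noncomputable section KittanehAux

variable {H : Type*} [NormedAddCommGroup H] [InnerProductSpace ℂ H] [CompleteSpace H]

private lemma le_of_sq_le_sq' {a b : ℝ} (hb : 0 ≤ b) (h : a ^ 2 ≤ b ^ 2) (ha : 0 ≤ a) :
    a ≤ b := by nlinarith

/-- Row operator `(x, y) ↦ S x + T y`. -/
private def rowOp (S T : H →L[ℂ] H) : WithLp 2 (H × H) →L[ℂ] H :=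
  (S ∘L ContinuousLinearMap.fst ℂ H H + T ∘L ContinuousLinearMap.snd ℂ H H) ∘L
    ((WithLp.prodContinuousLinearEquiv 2 ℂ H H) : WithLp 2 (H × H) →L[ℂ] H × H)

/-- Column operator `z ↦ (S z, T z)`. -/
private def colOp (S T : H →L[ℂ] H) : H →L[ℂ] WithLp 2 (H × H) :=
  (((WithLp.prodContinuousLinearEquiv 2 ℂ H H).symm : H × H →L[ℂ] WithLp 2 (H × H))) ∘L
    (S.prod T)

/-- Diagonal operator `(x, y) ↦ (P x, Q y)`. -/
private def diagOp (P Q : H →L[ℂ] H) : WithLp 2 (H × H) →L[ℂ] WithLp 2 (H × H) :=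
  (((WithLp.prodContinuousLinearEquiv 2 ℂ H H).symm : H × H →L[ℂ] WithLp 2 (H × H))) ∘L
    (P.prodMap Q) ∘L
    ((WithLp.prodContinuousLinearEquiv 2 ℂ H H) : WithLp 2 (H × H) →L[ℂ] H × H)

/-- Off-diagonal operator `(x, y) ↦ (P y, Q x)`. -/
private def offOp (P Q : H →L[ℂ] H) : WithLp 2 (H × H) →L[ℂ] WithLp 2 (H × H) :=
  (((WithLp.prodContinuousLinearEquiv 2 ℂ H H).symm : H × H →L[ℂ] WithLp 2 (H × H))) ∘L
    ((P ∘L ContinuousLinearMap.snd ℂ H H).prod (Q ∘L ContinuousLinearMap.fst ℂ H H)) ∘L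
    ((WithLp.prodContinuousLinearEquiv 2 ℂ H H) : WithLp 2 (H × H) →L[ℂ] H × H)

private lemma rowOp_apply (S T : H →L[ℂ] H) (x : WithLp 2 (H × H)) :
    rowOp S T x = S x.fst + T x.snd := by simp [rowOp]

private lemma colOp_fst (S T : H →L[ℂ] H) (z : H) : (colOp S T z).fst = S z := by simp [colOp]
private lemma colOp_snd (S T : H →L[ℂ] H) (z : H) : (colOp S T z).snd = T z := by simp [colOp]

private lemma diagOp_fst (P Q : H →L[ℂ] H) (x : WithLp 2 (H × H)) :
    (diagOp P Q x).fst = P x.fst := by simp [diagOp]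
private lemma diagOp_snd (P Q : H →L[ℂ] H) (x : WithLp 2 (H × H)) :
    (diagOp P Q x).snd = Q x.snd := by simp [diagOp]
private lemma offOp_fst (P Q : H →L[ℂ] H) (x : WithLp 2 (H × H)) :
    (offOp P Q x).fst = P x.snd := by simp [offOp]
private lemma offOp_snd (P Q : H →L[ℂ] H) (x : WithLp 2 (H × H)) :
    (offOp P Q x).snd = Q x.fst := by simp [offOp]

private lemma adjoint_rowOp {S T : H →L[ℂ] H} (hS : IsSelfAdjoint S) (hT : IsSelfAdjoint T) :
    (ContinuousLinearMap.adjoint (rowOp S T)) = colOp S T := by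
  symm
  rw [ContinuousLinearMap.eq_adjoint_iff]
  intro z w
  rw [WithLp.prod_inner_apply, rowOp_apply, inner_add_right, WithLp.ofLp_fst, WithLp.ofLp_snd,
    WithLp.ofLp_fst, WithLp.ofLp_snd, colOp_fst, colOp_snd]
  congr 1
  · nth_rewrite 1 [← hS.adjoint_eq]
    exact ContinuousLinearMap.adjoint_inner_left _ _ _
  · nth_rewrite 1 [← hT.adjoint_eq]
    exact ContinuousLinearMap.adjoint_inner_left _ _ _

private lemma rowOp_comp_colOp (S T : H →L[ℂ] H) :
    rowOp S T ∘L colOp S T = S * S + T * T := by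
  ext z
  simp [rowOp_apply, colOp_fst, colOp_snd, ContinuousLinearMap.mul_apply]

private lemma colOp_comp_rowOp (S T : H →L[ℂ] H) :
    colOp S T ∘L rowOp S T = diagOp (S * S) (T * T) + offOp (S ∘L T) (T ∘L S) := by
  ext x
  refine (WithLp.ext_iff 2).2 (Prod.ext ?_ ?_)
  · simp [rowOp_apply, colOp_fst, diagOp_fst, offOp_fst, ContinuousLinearMap.mul_apply,
      WithLp.add_fst]
  · simp [rowOp_apply, colOp_snd, diagOp_snd, offOp_snd, ContinuousLinearMap.mul_apply,
      WithLp.add_snd]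
    abel

private lemma norm_sq_withLp (x : WithLp 2 (H × H)) : ‖x‖ ^ 2 = ‖x.fst‖ ^ 2 + ‖x.snd‖ ^ 2 :=
  WithLp.prod_norm_sq_eq_of_L2 x

private lemma norm_diagOp_le (P Q : H →L[ℂ] H) : ‖diagOp P Q‖ ≤ max ‖P‖ ‖Q‖ := by
  refine ContinuousLinearMap.opNorm_le_bound _ (le_max_of_le_left (norm_nonneg _)) fun x => ?_
  have hm : (0:ℝ) ≤ max ‖P‖ ‖Q‖ := le_max_of_le_left (norm_nonneg _)
  refine le_of_sq_le_sq' (by positivity) ?_ (norm_nonneg _)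
  have h1 : ‖P x.fst‖ ≤ max ‖P‖ ‖Q‖ * ‖x.fst‖ :=
    (P.le_opNorm _).trans (by gcongr; exact le_max_left _ _)
  have h2 : ‖Q x.snd‖ ≤ max ‖P‖ ‖Q‖ * ‖x.snd‖ :=
    (Q.le_opNorm _).trans (by gcongr; exact le_max_right _ _)
  have h1' : ‖P x.fst‖ ^ 2 ≤ (max ‖P‖ ‖Q‖) ^ 2 * ‖x.fst‖ ^ 2 := by
    rw [← mul_pow]; exact pow_le_pow_left₀ (norm_nonneg _) h1 2
  have h2' : ‖Q x.snd‖ ^ 2 ≤ (max ‖P‖ ‖Q‖) ^ 2 * ‖x.snd‖ ^ 2 := by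
    rw [← mul_pow]; exact pow_le_pow_left₀ (norm_nonneg _) h2 2
  have e1 := norm_sq_withLp (diagOp P Q x)
  rw [diagOp_fst, diagOp_snd] at e1
  have e2 := norm_sq_withLp x
  rw [e1, mul_pow, e2, mul_add]
  linarith

private lemma norm_offOp_le (P Q : H →L[ℂ] H) : ‖offOp P Q‖ ≤ max ‖P‖ ‖Q‖ := by
  refine ContinuousLinearMap.opNorm_le_bound _ (le_max_of_le_left (norm_nonneg _)) fun x => ?_
  refine le_of_sq_le_sq' (by positivity) ?_ (norm_nonneg _)
  have h1 : ‖P x.snd‖ ≤ max ‖P‖ ‖Q‖ * ‖x.snd‖ :=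
    (P.le_opNorm _).trans (by gcongr; exact le_max_left _ _)
  have h2 : ‖Q x.fst‖ ≤ max ‖P‖ ‖Q‖ * ‖x.fst‖ :=
    (Q.le_opNorm _).trans (by gcongr; exact le_max_right _ _)
  have h1' : ‖P x.snd‖ ^ 2 ≤ (max ‖P‖ ‖Q‖) ^ 2 * ‖x.snd‖ ^ 2 := by
    rw [← mul_pow]; exact pow_le_pow_left₀ (norm_nonneg _) h1 2
  have h2' : ‖Q x.fst‖ ^ 2 ≤ (max ‖P‖ ‖Q‖) ^ 2 * ‖x.fst‖ ^ 2 := by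
    rw [← mul_pow]; exact pow_le_pow_left₀ (norm_nonneg _) h2 2
  have e1 := norm_sq_withLp (offOp P Q x)
  rw [offOp_fst, offOp_snd] at e1
  have e2 := norm_sq_withLp x
  rw [e1, mul_pow, e2, mul_add]
  linarith

end KittanehAux

set_option synthInstance.maxHeartbeats 400000 in

theorem stmt18
    {H : Type*} [NormedAddCommGroup H] [InnerProductSpace ℂ H] [CompleteSpace H]
    (A B : H →L[ℂ] H) (hA : 0 ≤ A) (hB : 0 ≤ B) :
    ‖A + B‖ ≤ max ‖A‖ ‖B‖ + ‖CFC.sqrt A * CFC.sqrt B‖ := by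
  set S := CFC.sqrt A with hSdef
  set T := CFC.sqrt B with hTdef
  have hS : IsSelfAdjoint S := IsSelfAdjoint.of_nonneg (CFC.sqrt_nonneg A)
  have hT : IsSelfAdjoint T := IsSelfAdjoint.of_nonneg (CFC.sqrt_nonneg B)
  have hSS : S * S = A := CFC.sqrt_mul_sqrt_self A hA
  have hTT : T * T = B := CFC.sqrt_mul_sqrt_self B hB
  set M := rowOp S T with hM
  -- ‖A + B‖ = ‖M ∘ M†‖ = ‖M† ∘ M‖
  have h1 : A + B = M ∘L (ContinuousLinearMap.adjoint M) := by
    rw [adjoint_rowOp hS hT, rowOp_comp_colOp, hSS, hTT]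
  have h2 : ‖M ∘L (ContinuousLinearMap.adjoint M)‖ =
      ‖(ContinuousLinearMap.adjoint M) ∘L M‖ := by
    have ha := ContinuousLinearMap.norm_adjoint_comp_self M
    have hb := ContinuousLinearMap.norm_adjoint_comp_self (ContinuousLinearMap.adjoint M)
    rw [ContinuousLinearMap.adjoint_adjoint] at hb
    rw [ha, hb, LinearIsometryEquiv.norm_map]
  have h3 : (ContinuousLinearMap.adjoint M) ∘L M =
      diagOp A B + offOp (S ∘L T) (T ∘L S) := by
    rw [adjoint_rowOp hS hT, colOp_comp_rowOp, hSS, hTT]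
  have h4 : ‖(ContinuousLinearMap.adjoint M) ∘L M‖ ≤
      max ‖A‖ ‖B‖ + ‖S ∘L T‖ := by
    rw [h3]
    refine (norm_add_le _ _).trans ?_
    have h5 : ‖T ∘L S‖ = ‖S ∘L T‖ := by
      have : T ∘L S = ContinuousLinearMap.adjoint (S ∘L T) := by
        rw [ContinuousLinearMap.adjoint_comp, hS.adjoint_eq, hT.adjoint_eq]
      rw [this, LinearIsometryEquiv.norm_map]
    have := norm_offOp_le (S ∘L T) (T ∘L S)
    rw [h5, max_self] at this
    exact add_le_add (norm_diagOp_le A B) this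
  calc ‖A + B‖ = ‖(ContinuousLinearMap.adjoint M) ∘L M‖ := by rw [h1, h2]
    _ ≤ max ‖A‖ ‖B‖ + ‖S ∘L T‖ := h4
    _ = max ‖A‖ ‖B‖ + ‖S * T‖ := rfl
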